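/- For $t < 0$, let $U_t(x,y,z) = x^4 + t x^2 + y^2 + z^2$. Then for every neighborhood $V$ of the origin in $\mathbb{R}^3$ there exists $C > 0$ such that for all small $\epsilon > 0$, $|\{(x,y,z) \in V : |U_t(x,y,z)| < \epsilon\}| \ge C\epsilon$; i.e., the growth index of $U_t$ at the origin is at most $1$. -/

import Mathlib

open MeasureTheory Set

set_option maxHeartbeats 1000000

lemma vol_shear_box (a b c d r : ℝ) (f : ℝ → ℝ → ℝ) (hf : Continuous fun p : ℝ × ℝ => f p.1 p.2) :
    volume {p : ℝ × ℝ × ℝ | p.1 ∈ Icc a b ∧ p.2.2 ∈ Icc c d ∧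
      p.2.1 ∈ Icc (f p.1 p.2.2) (f p.1 p.2.2 + r)} =
    ENNReal.ofReal (b - a) * (ENNReal.ofReal (d - c) * ENNReal.ofReal r) := by
  have hg : Continuous (fun p : ℝ × ℝ × ℝ => f p.1 p.2.2) :=
    hf.comp (continuous_fst.prodMk (continuous_snd.comp continuous_snd))
  have hmeas : MeasurableSet {p : ℝ × ℝ × ℝ | p.1 ∈ Icc a b ∧ p.2.2 ∈ Icc c d ∧
      p.2.1 ∈ Icc (f p.1 p.2.2) (f p.1 p.2.2 + r)} := by
    refine MeasurableSet.inter (measurable_fst measurableSet_Icc)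
      (MeasurableSet.inter ((measurable_snd.comp measurable_snd) measurableSet_Icc)
      (MeasurableSet.inter ?_ ?_))
    · exact measurableSet_le hg.measurable (measurable_fst.comp measurable_snd)
    · exact measurableSet_le (measurable_fst.comp measurable_snd) (hg.measurable.add_const r)
  rw [show (volume : Measure (ℝ × ℝ × ℝ)) = Measure.prod volume volume from Measure.volume_eq_prod ℝ (ℝ × ℝ),
    Measure.prod_apply hmeas]
  have key : ∀ x : ℝ, (volume : Measure (ℝ × ℝ))
      (Prod.mk x ⁻¹' {p : ℝ × ℝ × ℝ | p.1 ∈ Icc a b ∧ p.2.2 ∈ Icc c d ∧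
        p.2.1 ∈ Icc (f p.1 p.2.2) (f p.1 p.2.2 + r)}) =
      (Icc a b).indicator (fun _ => ENNReal.ofReal (d - c) * ENNReal.ofReal r) x := by
    intro x
    by_cases hx : x ∈ Icc a b
    · have hpre : Prod.mk x ⁻¹' {p : ℝ × ℝ × ℝ | p.1 ∈ Icc a b ∧ p.2.2 ∈ Icc c d ∧
          p.2.1 ∈ Icc (f p.1 p.2.2) (f p.1 p.2.2 + r)} =
          {q : ℝ × ℝ | q.2 ∈ Icc c d ∧ q.1 ∈ Icc (f x q.2) (f x q.2 + r)} := by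
        ext q; simp only [mem_preimage, mem_setOf_eq, hx, true_and]
      have hfx : Continuous (fun q : ℝ × ℝ => f x q.2) :=
        hf.comp ((continuous_const : Continuous fun _ : ℝ × ℝ => x).prodMk continuous_snd)
      have hTmeas : MeasurableSet {q : ℝ × ℝ | q.2 ∈ Icc c d ∧
          q.1 ∈ Icc (f x q.2) (f x q.2 + r)} := by
        refine MeasurableSet.inter (measurable_snd measurableSet_Icc)
          (MeasurableSet.inter ?_ ?_)
        · exact measurableSet_le hfx.measurable measurable_fst
        · exact measurableSet_le measurable_fst (hfx.measurable.add_const r)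
      rw [hpre, show (volume : Measure (ℝ × ℝ)) = Measure.prod volume volume from
          Measure.volume_eq_prod ℝ ℝ, Measure.prod_apply_symm hTmeas]
      have key2 : ∀ z : ℝ, (volume : Measure ℝ)
          ((fun y => (y, z)) ⁻¹' {q : ℝ × ℝ | q.2 ∈ Icc c d ∧
            q.1 ∈ Icc (f x q.2) (f x q.2 + r)}) =
          (Icc c d).indicator (fun _ => ENNReal.ofReal r) z := by
        intro z
        by_cases hz : z ∈ Icc c d
        · have : ((fun y => (y, z)) ⁻¹' {q : ℝ × ℝ | q.2 ∈ Icc c d ∧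
              q.1 ∈ Icc (f x q.2) (f x q.2 + r)}) = Icc (f x z) (f x z + r) := by
            ext y; simp only [mem_preimage, mem_setOf_eq, hz, true_and]
          rw [this, Real.volume_Icc, indicator_of_mem hz, add_sub_cancel_left]
        · have : ((fun y => (y, z)) ⁻¹' {q : ℝ × ℝ | q.2 ∈ Icc c d ∧
              q.1 ∈ Icc (f x q.2) (f x q.2 + r)}) = ∅ := by
            ext y
            simp only [mem_preimage, mem_setOf_eq, mem_empty_iff_false, iff_false, not_and]
            exact fun h _ => absurd h hz
          rw [this, indicator_of_notMem hz, measure_empty]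
      simp_rw [key2]
      rw [lintegral_indicator_const measurableSet_Icc, Real.volume_Icc,
        indicator_of_mem hx, mul_comm]
    · have hpre : Prod.mk x ⁻¹' {p : ℝ × ℝ × ℝ | p.1 ∈ Icc a b ∧ p.2.2 ∈ Icc c d ∧
          p.2.1 ∈ Icc (f p.1 p.2.2) (f p.1 p.2.2 + r)} = ∅ := by
        ext q
        simp only [mem_preimage, mem_setOf_eq, mem_empty_iff_false, iff_false, not_and]
        exact fun h => absurd h hx
      rw [hpre, indicator_of_notMem hx, measure_empty]
  simp_rw [key]
  rw [lintegral_indicator_const measurableSet_Icc, Real.volume_Icc, mul_comm]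

lemma stmt14_pt (m sm x0 ρ ε r x y z : ℝ)
    (hm : 0 < m) (hsm : 0 < sm) (hsm2 : sm ^ 2 = m)
    (hx0 : 0 < x0) (hx0a : x0 ≤ sm / 4) (hx0b : x0 * (4 * (1 + sm)) ≤ ρ)
    (hε : 0 < ε) (hrpos : 0 < r) (hrε : r * (6 * x0 * sm) = ε) (hrlt : r < x0 * sm)
    (hx1 : x0 ≤ x) (hx2 : x ≤ 2 * x0) (hzl : 0 ≤ z) (hzu : z ≤ x0 * sm / 2)
    (hy1 : Real.sqrt (x ^ 2 * (m - x ^ 2) - z ^ 2) ≤ y)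
    (hy2 : y ≤ Real.sqrt (x ^ 2 * (m - x ^ 2) - z ^ 2) + r) :
    (|x| < ρ ∧ |y| < ρ ∧ |z| < ρ) ∧ |x ^ 4 + (-m) * x ^ 2 + y ^ 2 + z ^ 2| < ε := by
  obtain ⟨s, hs_def⟩ : ∃ s : ℝ, s = x ^ 2 * (m - x ^ 2) - z ^ 2 := ⟨_, rfl⟩
  rw [← hs_def] at hy1 hy2
  have hxpos : 0 < x := lt_of_lt_of_le hx0 hx1
  have hxsm : x ≤ sm / 2 := by linarith
  have hxx : x ^ 2 ≤ m / 4 := by nlinarith [mul_self_le_mul_self hxpos.le hxsm]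
  have hx2sq : x0 ^ 2 ≤ x ^ 2 := by nlinarith [mul_self_le_mul_self hx0.le hx1]
  have hx2sq' : x ^ 2 ≤ 4 * x0 ^ 2 := by nlinarith [mul_self_le_mul_self hxpos.le hx2]
  have hmx : 3 * m / 4 ≤ m - x ^ 2 := by linarith
  have hzsq : z ^ 2 ≤ x0 ^ 2 * m / 4 := by nlinarith [mul_self_le_mul_self hzl hzu]
  have hprod : x0 ^ 2 * (3 * m / 4) ≤ x ^ 2 * (m - x ^ 2) :=
    mul_le_mul hx2sq hmx (by linarith) (sq_nonneg x)
  have hs_lb : x0 ^ 2 * m / 2 ≤ s := by rw [hs_def]; linarith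
  have hs_ub : s ≤ 4 * x0 ^ 2 * m := by
    have h1 : x ^ 2 * (m - x ^ 2) ≤ x ^ 2 * m := by nlinarith [sq_nonneg x, sq_nonneg (x ^ 2)]
    have h2 : x ^ 2 * m ≤ 4 * x0 ^ 2 * m := by nlinarith
    rw [hs_def]; nlinarith [sq_nonneg z]
  have hs_pos : 0 < s := lt_of_lt_of_le (by positivity) hs_lb
  have hsq : Real.sqrt s ^ 2 = s := Real.sq_sqrt hs_pos.le
  have hfnn : 0 ≤ Real.sqrt s := Real.sqrt_nonneg _
  have hfub : Real.sqrt s ≤ 2 * x0 * sm := by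
    rw [show 2 * x0 * sm = Real.sqrt ((2 * x0 * sm) ^ 2) from
      (Real.sqrt_sq (by positivity)).symm]
    exact Real.sqrt_le_sqrt (by nlinarith)
  have hy0 : 0 ≤ y := le_trans hfnn hy1
  have hU : x ^ 4 + (-m) * x ^ 2 + y ^ 2 + z ^ 2 = y ^ 2 - s := by rw [hs_def]; ring
  have hUnn : 0 ≤ y ^ 2 - s := by nlinarith
  have hUlt : y ^ 2 - s < ε := by
    have hysq : y ^ 2 ≤ (Real.sqrt s + r) ^ 2 := by nlinarith
    nlinarith [mul_le_mul_of_nonneg_right hfub hrpos.le,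
      mul_lt_mul_of_pos_right hrlt hrpos]
  refine ⟨⟨?_, ?_, ?_⟩, ?_⟩
  · rw [abs_of_pos hxpos]; nlinarith
  · rw [abs_of_nonneg hy0]; nlinarith
  · rw [abs_of_nonneg hzl]; nlinarith
  · rw [hU, abs_of_nonneg hUnn]; exact hUlt

theorem stmt14 (t : ℝ) (ht : t < 0) :
    ∀ V ∈ nhds (0 : ℝ × ℝ × ℝ), ∃ C : ℝ, 0 < C ∧ ∃ ε₀ : ℝ, 0 < ε₀ ∧
      ∀ ε : ℝ, 0 < ε → ε < ε₀ →
        ENNReal.ofReal (C * ε) ≤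
          volume {p : ℝ × ℝ × ℝ | p ∈ V ∧
            |p.1 ^ 4 + t * p.1 ^ 2 + p.2.1 ^ 2 + p.2.2 ^ 2| < ε} := by
  intro V hV
  obtain ⟨ρ, hρ, hball⟩ := Metric.mem_nhds_iff.mp hV
  obtain ⟨m, hm_def⟩ : ∃ m : ℝ, m = -t := ⟨_, rfl⟩
  have ht' : t = -m := by rw [hm_def]; ring
  have hm : 0 < m := by rw [hm_def]; linarith
  obtain ⟨sm, hsm_def⟩ : ∃ s : ℝ, s = Real.sqrt m := ⟨_, rfl⟩
  have hsm : 0 < sm := hsm_def ▸ Real.sqrt_pos.mpr hm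
  have hsm2 : sm ^ 2 = m := by rw [hsm_def]; exact Real.sq_sqrt hm.le
  obtain ⟨x0, hx0_def⟩ : ∃ c : ℝ, c = min (sm / 4) (ρ / (4 * (1 + sm))) := ⟨_, rfl⟩
  have hx0 : 0 < x0 := hx0_def ▸ lt_min (by positivity) (by positivity)
  have hx0a : x0 ≤ sm / 4 := hx0_def ▸ min_le_left _ _
  have hx0b : x0 * (4 * (1 + sm)) ≤ ρ := by
    rw [← le_div_iff₀ (by positivity), hx0_def]; exact min_le_right _ _
  refine ⟨x0 / 12, by positivity, 6 * x0 ^ 2 * m, by positivity, ?_⟩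
  intro ε hε hεlt
  obtain ⟨r, hr_def⟩ : ∃ r : ℝ, r = ε / (6 * x0 * sm) := ⟨_, rfl⟩
  have hrpos : 0 < r := by rw [hr_def]; positivity
  have hrε : r * (6 * x0 * sm) = ε := by
    rw [hr_def]; exact div_mul_cancel₀ _ (by positivity)
  have hrlt : r < x0 * sm := by
    rw [hr_def, div_lt_iff₀ (by positivity)]
    nlinarith [hsm2]
  obtain ⟨z1, hz1_def⟩ : ∃ z1 : ℝ, z1 = x0 * sm / 2 := ⟨_, rfl⟩
  have hfc : Continuous fun p : ℝ × ℝ =>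
      (fun x z => Real.sqrt (x ^ 2 * (m - x ^ 2) - z ^ 2)) p.1 p.2 := by
    apply Continuous.sqrt; fun_prop
  have hsub : {p : ℝ × ℝ × ℝ | p.1 ∈ Icc x0 (2 * x0) ∧ p.2.2 ∈ Icc 0 z1 ∧
      p.2.1 ∈ Icc ((fun x z => Real.sqrt (x ^ 2 * (m - x ^ 2) - z ^ 2)) p.1 p.2.2)
        ((fun x z => Real.sqrt (x ^ 2 * (m - x ^ 2) - z ^ 2)) p.1 p.2.2 + r)} ⊆
      {p : ℝ × ℝ × ℝ | p ∈ V ∧ |p.1 ^ 4 + t * p.1 ^ 2 + p.2.1 ^ 2 + p.2.2 ^ 2| < ε} := by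
    rintro ⟨x, y, z⟩ ⟨⟨hx1, hx2⟩, ⟨hzl, hzu⟩, hy1, hy2⟩
    simp only [mem_setOf_eq] at hy1 hy2 ⊢
    have hzu' : z ≤ x0 * sm / 2 := hz1_def ▸ hzu
    obtain ⟨⟨hxρ, hyρ, hzρ⟩, hUbound⟩ := stmt14_pt m sm x0 ρ ε r x y z
      hm hsm hsm2 hx0 hx0a hx0b hε hrpos hrε hrlt hx1 hx2 hzl hzu' hy1 hy2
    constructor
    · apply hball
      rw [Metric.mem_ball]
      have hd : dist ((x, y, z) : ℝ × ℝ × ℝ) 0 = max |x| (max |y| |z|) := by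
        simp [Prod.dist_eq, Real.dist_eq, Prod.norm_def, Real.norm_eq_abs]
      rw [hd]
      exact max_lt hxρ (max_lt hyρ hzρ)
    · rw [ht']; exact hUbound
  have hvol := vol_shear_box x0 (2 * x0) 0 z1 r
    (fun x z => Real.sqrt (x ^ 2 * (m - x ^ 2) - z ^ 2)) hfc
  have harith : (2 * x0 - x0) * ((z1 - 0) * r) = x0 / 12 * ε := by
    rw [hz1_def, hr_def]; field_simp; ring
  have hz1pos : 0 < z1 := by rw [hz1_def]; positivity
  calc ENNReal.ofReal (x0 / 12 * ε)
      = ENNReal.ofReal (2 * x0 - x0) * (ENNReal.ofReal (z1 - 0) * ENNReal.ofReal r) := by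
        rw [← ENNReal.ofReal_mul (by linarith), ← ENNReal.ofReal_mul (by linarith), harith]
    _ = volume {p : ℝ × ℝ × ℝ | p.1 ∈ Icc x0 (2 * x0) ∧ p.2.2 ∈ Icc 0 z1 ∧
        p.2.1 ∈ Icc ((fun x z => Real.sqrt (x ^ 2 * (m - x ^ 2) - z ^ 2)) p.1 p.2.2)
          ((fun x z => Real.sqrt (x ^ 2 * (m - x ^ 2) - z ^ 2)) p.1 p.2.2 + r)} := hvol.symm
    _ ≤ _ := measure_mono hsub
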